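/- Let x ∈ ∂J*(−A*y), x̄ ∈ ∂J*(−A*ȳ), Ax̄ = f, and v = Au − f^δ with −sA*v ∈ ∂J(u). For s > 0 and any η ∈ (0,1], one has D^{−A*ȳ}(u, x̄) + D^{−sA*v}(x̄, u) + (1−η)s‖Au − f‖² ≤ (1/(4ηs))(‖ȳ‖ + sδ)², provided ‖f^δ − f‖ ≤ δ. -/
import Mathlib


open Set MeasureTheory

noncomputable section

notation "⟪" x ", " y "⟫" => @inner ℝ _ _ x y

/-- `u` is a subgradient of the convex function `J` at `x`. -/
def HasSubgrad {p : ℕ} (J : EuclideanSpace ℝ (Fin p) → ℝ) (u x : EuclideanSpace ℝ (Fin p)) :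
    Prop :=
  ∀ z, J x + ⟪u, z - x⟫ ≤ J z

/-- Bregman divergence `D^u(x₁,x₂) = J(x₁) - J(x₂) - ⟨u, x₁ - x₂⟩` (for `u ∈ ∂J(x₂)`). -/
def Breg {p : ℕ} (J : EuclideanSpace ℝ (Fin p) → ℝ) (u x₁ x₂ : EuclideanSpace ℝ (Fin p)) : ℝ :=
  J x₁ - J x₂ - ⟪u, x₁ - x₂⟫
/-- Key Tikhonov estimate: if `-A*ȳ ∈ ∂J(x̄)`, `Ax̄ = f`, `v = Au - f^δ` with
`-sA*v ∈ ∂J(u)`, `‖f^δ - f‖ ≤ δ`, then for any `s > 0` and `η ∈ (0,1]`,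
`D^{-A*ȳ}(u, x̄) + D^{-sA*v}(x̄, u) + (1-η)s‖Au - f‖² ≤ (1/(4ηs))(‖ȳ‖ + sδ)²`. -/
theorem tikhonov_key_estimate {p d : ℕ}
    (A : EuclideanSpace ℝ (Fin p) →L[ℝ] EuclideanSpace ℝ (Fin d))
    (J : EuclideanSpace ℝ (Fin p) → ℝ) (hJ : ConvexOn ℝ Set.univ J)
    (f fδ : EuclideanSpace ℝ (Fin d)) (δ : ℝ) (hnoise : ‖fδ - f‖ ≤ δ)
    (x xb u : EuclideanSpace ℝ (Fin p)) (y yb v : EuclideanSpace ℝ (Fin d))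
    (hx : HasSubgrad J (-(ContinuousLinearMap.adjoint A y)) x)
    (hxb : HasSubgrad J (-(ContinuousLinearMap.adjoint A yb)) xb)
    (hfeas : A xb = f)
    (s η : ℝ) (hs : 0 < s) (hη : η ∈ Set.Ioc (0:ℝ) 1)
    (hv : v = A u - fδ)
    (hu : HasSubgrad J (-(s • ContinuousLinearMap.adjoint A v)) u) :
    Breg J (-(ContinuousLinearMap.adjoint A yb)) u xb +
        Breg J (-(s • ContinuousLinearMap.adjoint A v)) xb u +
        (1 - η) * s * ‖A u - f‖ ^ 2 ≤
      1 / (4 * η * s) * (‖yb‖ + s * δ) ^ 2 := by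
  obtain ⟨hη0, hη1⟩ := hη
  set w : EuclideanSpace ℝ (Fin d) := A u - f with hw
  -- key identity
  have hsum : Breg J (-(ContinuousLinearMap.adjoint A yb)) u xb +
      Breg J (-(s • ContinuousLinearMap.adjoint A v)) xb u
      = ⟪yb + s • (fδ - f), w⟫ - s * ‖w‖ ^ 2 := by
    have h1 : ⟪-(ContinuousLinearMap.adjoint A yb), u - xb⟫ = -⟪yb, w⟫ := by
      rw [inner_neg_left, ContinuousLinearMap.adjoint_inner_left, map_sub, hfeas]
    have h2 : ⟪-(s • ContinuousLinearMap.adjoint A v), xb - u⟫ = s * ⟪v, w⟫ := by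
      rw [inner_neg_left, inner_smul_left, ContinuousLinearMap.adjoint_inner_left,
        map_sub, hfeas]
      have hvv : ⟪v, f - A u⟫ = -⟪v, w⟫ := by
        rw [hw, ← inner_neg_right, neg_sub]
      simp only [hvv, RCLike.conj_to_real]
      ring
    have h3 : ⟪v, w⟫ = ‖w‖ ^ 2 - ⟪fδ - f, w⟫ := by
      have : v = w + (f - fδ) := by rw [hv, hw]; abel
      rw [this, inner_add_left, real_inner_self_eq_norm_sq]
      have hff : ⟪f - fδ, w⟫ = -⟪fδ - f, w⟫ := by
        rw [← inner_neg_left, neg_sub]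
      rw [hff]; ring
    rw [Breg, Breg, h1, h2, h3, inner_add_left, inner_smul_left]
    simp [RCLike.conj_to_real]
    ring
  rw [hsum]
  have hC : ⟪yb + s • (fδ - f), w⟫ ≤ (‖yb‖ + s * δ) * ‖w‖ := by
    calc ⟪yb + s • (fδ - f), w⟫ ≤ ‖yb + s • (fδ - f)‖ * ‖w‖ := real_inner_le_norm _ _
    _ ≤ (‖yb‖ + s * δ) * ‖w‖ := by
        apply mul_le_mul_of_nonneg_right _ (norm_nonneg _)
        calc ‖yb + s • (fδ - f)‖ ≤ ‖yb‖ + ‖s • (fδ - f)‖ := norm_add_le _ _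
        _ ≤ ‖yb‖ + s * δ := by
            rw [norm_smul, Real.norm_eq_abs, abs_of_pos hs]
            nlinarith
  have hwn : (0:ℝ) ≤ ‖w‖ := norm_nonneg _
  have hrw : 1 / (4 * η * s) * (‖yb‖ + s * δ) ^ 2 = (‖yb‖ + s * δ) ^ 2 / (4 * η * s) := by
    ring
  rw [hrw, le_div_iff₀ (by positivity)]
  nlinarith [sq_nonneg ((‖yb‖ + s * δ) - 2 * η * s * ‖w‖), mul_pos hη0 hs, hwn,
    mul_le_mul_of_nonneg_right hC (by positivity : (0:ℝ) ≤ 4 * η * s)]
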